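/- Let X be a compact metric space, T:X→X continuous, (n_k) a strictly increasing sequence of natural numbers, and F⊆ℕ a Fölner set along (n_k) whose lower asymptotic density along (n_k) is positive. Then for any family (μ_{n_k})_k of Borel probability measures on X, every weak* cluster point of the sequence μ_{n_k}^{F_{n_k}} := (1/#F_{n_k}) Σ_{j∈F_{n_k}} T^j_* μ_{n_k} is a T-invariant Borel probability measure. -/

import Mathlib

open MeasureTheory Filter Topology Set
open scoped ENNReal NNReal Classical

noncomputable section


/-- `E ∩ {0, …, n-1}` as a finset. -/
def sec (E : Set ℕ) (n : ℕ) : Finset ℕ := (Finset.range n).filter (· ∈ E)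

/-- `#(E ∩ {0, …, n-1})`. -/
def secCard (E : Set ℕ) (n : ℕ) : ℕ := (sec E n).card

/-- The boundary `∂E` of a set of integers: the points of `E` one of whose neighbours
(in `ℤ`) lies outside of `E`. -/
def bdry (E : Set ℕ) : Set ℕ := {k | k ∈ E ∧ ((k + 1) ∉ E ∨ k = 0 ∨ (k - 1) ∉ E)}

/-- The upper asymptotic density of `E` along the subsequence `(n_k)`. -/
def upDensAlong (E : Set ℕ) (nk : ℕ → ℕ) : ℝ :=
  Filter.limsup (fun k => (secCard E (nk k) : ℝ) / (nk k : ℝ)) Filter.atTop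

/-- The lower asymptotic density of `E` along the subsequence `(n_k)`. -/
def loDensAlong (E : Set ℕ) (nk : ℕ → ℕ) : ℝ :=
  Filter.liminf (fun k => (secCard E (nk k) : ℝ) / (nk k : ℝ)) Filter.atTop

/-- The upper asymptotic density of `E`. -/
def upDens (E : Set ℕ) : ℝ :=
  Filter.limsup (fun n => (secCard E n : ℝ) / (n : ℝ)) Filter.atTop

/-- `F` is Fölner along `(n_k)`: its boundary has zero upper asymptotic density along
`(n_k)`. -/
def FolnerAlong (F : Set ℕ) (nk : ℕ → ℕ) : Prop := upDensAlong (bdry F) nk = 0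

/-- `Fill^N(E)`: the union of all integer intervals `[a, b)` with `a, b ∈ E` and
`0 < b - a ≤ N`. -/
def fill (N : ℕ) (E : Set ℕ) : Set ℕ :=
  {k | ∃ a ∈ E, ∃ b ∈ E, a ≤ k ∧ k < b ∧ a < b ∧ b - a ≤ N}

/-- The averaged push-forward measure `μ^{F_n} = (1/#F_n) ∑_{j ∈ F_n} T^j_* μ`. -/
def avgMeas {X : Type*} [MeasurableSpace X] (T : X → X) (F : Set ℕ) (μ : Measure X)
    (n : ℕ) : Measure X :=
  ((secCard F n : ℝ≥0∞))⁻¹ • ∑ j ∈ sec F n, Measure.map (T^[j]) μ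

/-- `ν` is a weak* cluster point of the sequence of measures `s`, i.e. the weak* limit of
a subsequence. -/
def WeakClusterPt {X : Type*} [MeasurableSpace X] [TopologicalSpace X]
    (ν : Measure X) (s : ℕ → Measure X) : Prop :=
  ∃ φ : ℕ → ℕ, StrictMono φ ∧
    ∀ g : C(X, ℝ), Tendsto (fun k => ∫ x, g x ∂(s (φ k))) atTop (𝓝 (∫ x, g x ∂ν))

set_option linter.unusedSectionVars false

/-! ### Auxiliary lemmas -/

lemma mem_sec_iff {E : Set ℕ} {n k : ℕ} : k ∈ sec E n ↔ k < n ∧ k ∈ E := by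
  simp [sec]

lemma secCard_le (E : Set ℕ) (n : ℕ) : secCard E n ≤ n :=
  (Finset.card_filter_le _ _).trans_eq (Finset.card_range n)

lemma ratio_nonneg (E : Set ℕ) (n : ℕ) : 0 ≤ (secCard E n : ℝ) / n := by positivity

lemma ratio_le_one (E : Set ℕ) (n : ℕ) : (secCard E n : ℝ) / n ≤ 1 := by
  rcases Nat.eq_zero_or_pos n with h | h
  · simp [h]
  · rw [div_le_one (by exact_mod_cast h)]
    exact_mod_cast secCard_le E n

lemma tendsto_ratio_zero (E : Set ℕ) (nk : ℕ → ℕ) (h : upDensAlong E nk = 0) :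
    Tendsto (fun k => (secCard E (nk k) : ℝ) / (nk k : ℝ)) atTop (𝓝 0) := by
  apply tendsto_order.2
  constructor
  · intro a ha
    exact Eventually.of_forall fun k => lt_of_lt_of_le ha (ratio_nonneg _ _)
  · intro b hb
    have hbdd : IsBoundedUnder (· ≤ ·) atTop
        (fun k => (secCard E (nk k) : ℝ) / (nk k : ℝ)) :=
      ⟨1, eventually_map.2 (Eventually.of_forall fun k => ratio_le_one _ _)⟩
    have hls : limsup (fun k => (secCard E (nk k) : ℝ) / (nk k : ℝ)) atTop < b := by
      have : upDensAlong E nk < b := h ▸ hb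
      exact this
    exact eventually_lt_of_limsup_lt hls hbdd

lemma eventually_ratio_gt (F : Set ℕ) (nk : ℕ → ℕ) (h : 0 < loDensAlong F nk) :
    ∀ᶠ k in atTop, loDensAlong F nk / 2 < (secCard F (nk k) : ℝ) / (nk k : ℝ) := by
  have hbdd : IsBoundedUnder (· ≥ ·) atTop
      (fun k => (secCard F (nk k) : ℝ) / (nk k : ℝ)) :=
    ⟨0, eventually_map.2 (Eventually.of_forall fun k => ratio_nonneg _ _)⟩
  have : loDensAlong F nk / 2
      < liminf (fun k => (secCard F (nk k) : ℝ) / (nk k : ℝ)) atTop :=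
    half_lt_self h
  exact eventually_lt_of_lt_liminf this hbdd

/-- The key combinatorial estimate: shifting a sum over `F ∩ [0,n)` changes it by at most
`C * (2 * #(∂F ∩ [0,n)) + 1)`. -/
lemma abs_sum_shift_le (a : ℕ → ℝ) (C : ℝ) (hC : ∀ j, |a j| ≤ C) (F : Set ℕ) (n : ℕ) :
    |(∑ j ∈ sec F n, a (j + 1)) - ∑ j ∈ sec F n, a j|
      ≤ C * (2 * (secCard (bdry F) n : ℝ) + 1) := by
  classical
  have hC0 : 0 ≤ C := (abs_nonneg _).trans (hC 0)
  set A := sec F n with hA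
  set B := A.image (· + 1) with hB
  have hsum : ∑ j ∈ A, a (j + 1) = ∑ j ∈ B, a j := by
    rw [hB, Finset.sum_image (by intro x _ y _ h; simp only at h; omega)]
  have split : ∀ s t : Finset ℕ, ∑ j ∈ s, a j = (∑ j ∈ s \ t, a j) + ∑ j ∈ s ∩ t, a j := by
    intro s t
    rw [← Finset.sum_union (Finset.disjoint_sdiff_inter s t), Finset.sdiff_union_inter]
  have key : (∑ j ∈ A, a (j + 1)) - ∑ j ∈ A, a j
      = (∑ j ∈ B \ A, a j) - ∑ j ∈ A \ B, a j := by
    rw [hsum, split B A, split A B, Finset.inter_comm]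
    ring
  have habs : ∀ s : Finset ℕ, |∑ j ∈ s, a j| ≤ C * s.card := by
    intro s
    calc |∑ j ∈ s, a j| ≤ ∑ j ∈ s, |a j| := Finset.abs_sum_le_sum_abs _ _
      _ ≤ ∑ _j ∈ s, C := Finset.sum_le_sum fun j _ => hC j
      _ = C * s.card := by rw [Finset.sum_const, nsmul_eq_mul, mul_comm]
  have subAB : A \ B ⊆ sec (bdry F) n := by
    intro j hj
    rw [Finset.mem_sdiff] at hj
    obtain ⟨hjA, hjB⟩ := hj
    rw [mem_sec_iff] at hjA
    rw [mem_sec_iff]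
    refine ⟨hjA.1, hjA.2, ?_⟩
    rcases Nat.eq_zero_or_pos j with h0 | h0
    · exact Or.inr (Or.inl h0)
    · refine Or.inr (Or.inr fun hmem => hjB ?_)
      rw [hB, Finset.mem_image]
      exact ⟨j - 1, mem_sec_iff.2 ⟨by omega, hmem⟩, by omega⟩
  have subBA : B \ A ⊆ insert n ((sec (bdry F) n).image (· + 1)) := by
    intro j hj
    rw [Finset.mem_sdiff] at hj
    obtain ⟨hjB, hjA⟩ := hj
    rw [hB, Finset.mem_image] at hjB
    obtain ⟨i, hiA, rfl⟩ := hjB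
    rw [mem_sec_iff] at hiA
    rw [Finset.mem_insert]
    by_cases hn : i + 1 = n
    · exact Or.inl hn
    · right
      rw [Finset.mem_image]
      refine ⟨i, mem_sec_iff.2 ⟨hiA.1, hiA.2, Or.inl fun hc => ?_⟩, rfl⟩
      exact hjA (mem_sec_iff.2 ⟨by omega, hc⟩)
  have cardBA : ((B \ A).card : ℝ) ≤ (secCard (bdry F) n : ℝ) + 1 := by
    have h1 : (B \ A).card ≤ secCard (bdry F) n + 1 := by
      calc (B \ A).card ≤ (insert n ((sec (bdry F) n).image (· + 1))).card :=
            Finset.card_le_card subBA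
        _ ≤ ((sec (bdry F) n).image (· + 1)).card + 1 := Finset.card_insert_le _ _
        _ ≤ secCard (bdry F) n + 1 := by
            exact Nat.add_le_add_right (Finset.card_image_le) 1
    exact_mod_cast h1
  have cardAB : ((A \ B).card : ℝ) ≤ (secCard (bdry F) n : ℝ) := by
    exact_mod_cast Finset.card_le_card subAB
  rw [key]
  calc |(∑ j ∈ B \ A, a j) - ∑ j ∈ A \ B, a j|
      ≤ |∑ j ∈ B \ A, a j| + |∑ j ∈ A \ B, a j| := abs_sub _ _
    _ ≤ C * ((B \ A).card : ℝ) + C * ((A \ B).card : ℝ) := add_le_add (habs _) (habs _)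
    _ ≤ C * ((secCard (bdry F) n : ℝ) + 1) + C * (secCard (bdry F) n : ℝ) := by
        exact add_le_add (by nlinarith) (by nlinarith)
    _ = C * (2 * (secCard (bdry F) n : ℝ) + 1) := by ring

section MeasureLemmas

variable {X : Type*} [MetricSpace X] [CompactSpace X] [MeasurableSpace X] [BorelSpace X]

lemma integrable_cm (g : C(X, ℝ)) (ρ : Measure X) [IsFiniteMeasure ρ] :
    Integrable (fun x => g x) ρ :=
  g.continuous.integrable_of_hasCompactSupport (HasCompactSupport.of_compactSpace _)

lemma avgMeas_prob (T : X → X) (hT : Continuous T) (F : Set ℕ) (ρ : Measure X)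
    [IsProbabilityMeasure ρ] (n : ℕ) (h : 0 < secCard F n) :
    IsProbabilityMeasure (avgMeas T F ρ n) := by
  constructor
  rw [avgMeas]
  rw [Measure.smul_apply, Measure.finset_sum_apply, smul_eq_mul]
  have hmap : ∀ j ∈ sec F n, Measure.map (T^[j]) ρ univ = 1 := fun j _ => by
    rw [Measure.map_apply (hT.measurable.iterate j) MeasurableSet.univ]
    simp
  rw [Finset.sum_congr rfl hmap, Finset.sum_const, nsmul_eq_mul, mul_one]
  exact ENNReal.inv_mul_cancel (by exact_mod_cast h.ne') (ENNReal.natCast_ne_top _)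

lemma avgMeas_integral (T : X → X) (hT : Continuous T) (F : Set ℕ) (ρ : Measure X)
    [IsProbabilityMeasure ρ] (n : ℕ) (g : C(X, ℝ)) :
    ∫ x, g x ∂(avgMeas T F ρ n)
      = (secCard F n : ℝ)⁻¹ * ∑ j ∈ sec F n, ∫ x, g (T^[j] x) ∂ρ := by
  have hTm : ∀ j : ℕ, Measurable (T^[j]) := fun j => hT.measurable.iterate j
  have hint : ∀ j ∈ sec F n, Integrable (fun x => g x) (Measure.map (T^[j]) ρ) := by
    intro j _
    haveI : IsProbabilityMeasure (Measure.map (T^[j]) ρ) :=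
      Measure.isProbabilityMeasure_map (hTm j).aemeasurable
    exact integrable_cm g _
  rw [avgMeas, integral_smul_measure, integral_finset_sum_measure hint,
    ENNReal.toReal_inv, ENNReal.toReal_natCast, smul_eq_mul]
  congr 1
  refine Finset.sum_congr rfl fun j _ => ?_
  exact integral_map (hTm j).aemeasurable g.continuous.aestronglyMeasurable

lemma abs_integral_comp_le (g : C(X, ℝ)) (f : X → X) (ρ : Measure X)
    [IsProbabilityMeasure ρ] : |∫ x, g (f x) ∂ρ| ≤ ‖g‖ := by
  have h := norm_integral_le_of_norm_le_const (μ := ρ) (f := fun x => g (f x)) (C := ‖g‖)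
    (Eventually.of_forall fun x => g.norm_coe_le_norm _)
  simpa [Real.norm_eq_abs] using h

end MeasureLemmas
/-- Let `X` be a compact metric space, `T : X → X` continuous, `(n_k)` a
strictly increasing sequence of naturals, and `F ⊆ ℕ` a Fölner set along `(n_k)` with
positive lower asymptotic density along `(n_k)`. Then for any family `(μ_{n_k})` of Borel
probability measures on `X`, every weak* cluster point of
`μ_{n_k}^{F_{n_k}} = (1/#F_{n_k}) ∑_{j ∈ F_{n_k}} T^j_* μ_{n_k}` is a `T`-invariant Borel
probability measure. -/
theorem folner_cluster_points_invariant {X : Type*} [MetricSpace X] [CompactSpace X]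
    [MeasurableSpace X] [BorelSpace X]
    (T : X → X) (hT : Continuous T)
    (nk : ℕ → ℕ) (hnk : StrictMono nk)
    (F : Set ℕ) (hFol : FolnerAlong F nk) (hdens : 0 < loDensAlong F nk)
    (μ : ℕ → Measure X) (hμ : ∀ k, IsProbabilityMeasure (μ k))
    (ν : Measure X) (hfin : IsFiniteMeasure ν)
    (hcl : WeakClusterPt ν (fun k => avgMeas T F (μ k) (nk k))) :
    IsProbabilityMeasure ν ∧ Measure.map T ν = ν := by
  obtain ⟨φ, hφ, hconv⟩ := hcl
  have hφt : Tendsto φ atTop atTop := hφ.tendsto_atTop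
  set m : ℕ → ℕ := fun k => nk (φ k) with hm
  set c := loDensAlong F nk with hc
  have hc2 : 0 < c / 2 := half_pos hdens
  have hlowφ : ∀ᶠ k in atTop, c / 2 < (secCard F (m k) : ℝ) / (m k : ℝ) :=
    hφt.eventually (eventually_ratio_gt F nk hdens)
  have hposφ : ∀ᶠ k in atTop, 0 < secCard F (m k) := by
    filter_upwards [hlowφ] with k hk
    by_contra h
    push_neg at h
    have h0 : secCard F (m k) = 0 := Nat.le_zero.mp h
    rw [h0] at hk
    norm_num at hk
    linarith
  have hmpos : ∀ᶠ k in atTop, 0 < m k := by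
    filter_upwards [hposφ] with k hk
    exact lt_of_lt_of_le hk (secCard_le F (m k))
  have hmtop : Tendsto (fun k => (m k : ℝ)) atTop atTop :=
    tendsto_natCast_atTop_atTop.comp (hnk.comp hφ).tendsto_atTop
  have hinvm : Tendsto (fun k => ((m k : ℝ))⁻¹) atTop (𝓝 0) := hmtop.inv_tendsto_atTop
  have hbdryφ : Tendsto (fun k => (secCard (bdry F) (m k) : ℝ) / (m k : ℝ)) atTop (𝓝 0) :=
    (tendsto_ratio_zero (bdry F) nk hFol).comp hφt
  -- Part 1 : ν is a probability measure
  have hone := hconv 1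
  have heq1 : ∀ᶠ k in atTop,
      ∫ x, (1 : C(X, ℝ)) x ∂(avgMeas T F (μ (φ k)) (m k)) = 1 := by
    filter_upwards [hposφ] with k hk
    haveI := hμ (φ k)
    haveI := avgMeas_prob T hT F (μ (φ k)) (m k) hk
    simp
  have hlim1 : Tendsto (fun k => ∫ x, (1 : C(X, ℝ)) x ∂(avgMeas T F (μ (φ k)) (m k)))
      atTop (𝓝 1) := Tendsto.congr' (heq1.mono fun k hk => hk.symm) tendsto_const_nhds
  have huniv : (ν univ).toReal = 1 := by
    have h := tendsto_nhds_unique hone hlim1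
    have h1 : ∫ x, (1 : C(X, ℝ)) x ∂ν = (ν univ).toReal := by simp; rfl
    rw [h1] at h
    exact h
  haveI hprob : IsProbabilityMeasure ν := ⟨(ENNReal.toReal_eq_one_iff _).mp huniv⟩
  -- Part 2 : invariance
  have hint : ∀ g : C(X, ℝ), ∫ x, g (T x) ∂ν = ∫ x, g x ∂ν := by
    intro g
    set gT : C(X, ℝ) := g.comp ⟨T, hT⟩ with hgTdef
    have hdiff := (hconv gT).sub (hconv g)
    have hbound : ∀ᶠ k in atTop,
        |(∫ x, gT x ∂(avgMeas T F (μ (φ k)) (m k)))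
            - ∫ x, g x ∂(avgMeas T F (μ (φ k)) (m k))|
          ≤ ‖g‖ * ((2 * ((secCard (bdry F) (m k) : ℝ) / (m k : ℝ)) + ((m k : ℝ))⁻¹)
              / (c / 2)) := by
      filter_upwards [hposφ, hlowφ, hmpos] with k hk hl hmp
      haveI := hμ (φ k)
      rw [avgMeas_integral T hT F _ _ gT, avgMeas_integral T hT F _ _ g, ← mul_sub]
      have hrw : ∀ j ∈ sec F (m k),
          (∫ x, gT (T^[j] x) ∂(μ (φ k))) = ∫ x, g (T^[j + 1] x) ∂(μ (φ k)) := by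
        intro j _
        refine integral_congr_ae (Eventually.of_forall fun x => ?_)
        simp [hgTdef, Function.iterate_succ_apply']
      rw [Finset.sum_congr rfl hrw]
      set a : ℕ → ℝ := fun j => ∫ x, g (T^[j] x) ∂(μ (φ k)) with ha
      have haC : ∀ j, |a j| ≤ ‖g‖ := fun j => abs_integral_comp_le g _ _
      have hkey := abs_sum_shift_le a ‖g‖ haC F (m k)
      have hCpos : (0 : ℝ) < (secCard F (m k) : ℝ) := by exact_mod_cast hk
      have hmpos' : (0 : ℝ) < (m k : ℝ) := by exact_mod_cast hmp
      rw [abs_mul, abs_inv, abs_of_nonneg hCpos.le]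
      set B : ℝ := (secCard (bdry F) (m k) : ℝ) with hB
      have hB0 : 0 ≤ B := by positivity
      have step1 : (secCard F (m k) : ℝ)⁻¹
            * |(∑ j ∈ sec F (m k), a (j + 1)) - ∑ j ∈ sec F (m k), a j|
          ≤ (secCard F (m k) : ℝ)⁻¹ * (‖g‖ * (2 * B + 1)) := by
        gcongr
      refine step1.trans ?_
      have hcm : c / 2 * (m k : ℝ) ≤ (secCard F (m k) : ℝ) := by
        rw [← le_div_iff₀ hmpos']
        exact hl.le
      have hgnn : (0 : ℝ) ≤ ‖g‖ := norm_nonneg g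
      have key2 : (2 * B + 1) / (secCard F (m k) : ℝ) ≤ ((2 * B + 1) / (m k : ℝ)) / (c / 2) := by
        rw [div_le_div_iff₀ hCpos (by positivity)]
        calc (2 * B + 1) * (c / 2) = (2 * B + 1) / (m k : ℝ) * (c / 2 * (m k : ℝ)) := by
              field_simp
          _ ≤ (2 * B + 1) / (m k : ℝ) * (secCard F (m k) : ℝ) := by
              gcongr
      have hnum : (2 * B + 1) / (m k : ℝ) = 2 * (B / (m k : ℝ)) + ((m k : ℝ))⁻¹ := by
        field_simp
      calc (secCard F (m k) : ℝ)⁻¹ * (‖g‖ * (2 * B + 1))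
          = ‖g‖ * ((2 * B + 1) / (secCard F (m k) : ℝ)) := by
            rw [div_eq_mul_inv]; ring
        _ ≤ ‖g‖ * (((2 * B + 1) / (m k : ℝ)) / (c / 2)) :=
            mul_le_mul_of_nonneg_left key2 hgnn
        _ = ‖g‖ * ((2 * (B / (m k : ℝ)) + ((m k : ℝ))⁻¹) / (c / 2)) := by rw [hnum]
    have hE : Tendsto (fun k => ‖g‖ * ((2 * ((secCard (bdry F) (m k) : ℝ) / (m k : ℝ))
        + ((m k : ℝ))⁻¹) / (c / 2))) atTop (𝓝 0) := by
      have h1 : Tendsto (fun k => 2 * ((secCard (bdry F) (m k) : ℝ) / (m k : ℝ))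
          + ((m k : ℝ))⁻¹) atTop (𝓝 0) := by
        have h2 := (hbdryφ.const_mul 2).add hinvm
        simpa using h2
      have h3 := (h1.div_const (c / 2)).const_mul ‖g‖
      simpa using h3
    have hzero : Tendsto (fun k =>
        (∫ x, gT x ∂(avgMeas T F (μ (φ k)) (m k)))
          - ∫ x, g x ∂(avgMeas T F (μ (φ k)) (m k))) atTop (𝓝 0) :=
      squeeze_zero_norm' (hbound.mono fun k hk => by rwa [Real.norm_eq_abs]) hE
    have hfinal := tendsto_nhds_unique hdiff hzero
    exact sub_eq_zero.mp hfinal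
  refine ⟨hprob, ?_⟩
  haveI : IsProbabilityMeasure (Measure.map T ν) :=
    Measure.isProbabilityMeasure_map hT.measurable.aemeasurable
  apply ext_of_forall_lintegral_eq_of_IsFiniteMeasure
  intro f
  have hfc : Continuous fun x => (f x : ℝ) := NNReal.continuous_coe.comp f.continuous
  have key : ∀ (ρ : Measure X) [IsFiniteMeasure ρ],
      ∫⁻ x, (f x : ℝ≥0∞) ∂ρ = ENNReal.ofReal (∫ x, (f x : ℝ) ∂ρ) := by
    intro ρ _
    rw [ofReal_integral_eq_lintegral_ofReal
      (hfc.integrable_of_hasCompactSupport (HasCompactSupport.of_compactSpace _))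
      (Eventually.of_forall fun x => (f x).coe_nonneg)]
    simp_rw [ENNReal.ofReal_coe_nnreal]
  rw [key _, key _]
  congr 1
  rw [integral_map hT.measurable.aemeasurable hfc.aestronglyMeasurable]
  exact hint ⟨fun x => (f x : ℝ), hfc⟩

end
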